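/- Let A : [0,T] → Matrix (Fin m) (Fin m) ℂ be continuous. Then for every t ∈ [0,T] the Dyson series V(t) := 1 + Σ_{n=1}^∞ iⁿ ∫₀^t ∫₀^{t₁} ⋯ ∫₀^{t_{n−1}} A(t₁)·A(t₂)⋯A(t_n) dt_n ⋯ dt₂ dt₁ converges (absolutely in the matrix norm), and V is the unique differentiable solution on [0,T] of i·V′(t) = −A(t)·V(t) with V(0) = 1. -/

import Mathlib

attribute [local instance] Matrix.linftyOpNormedRing Matrix.linftyOpNormedAlgebra

open MeasureTheory intervalIntegral in
/-- The Dyson series `V(t) = 1 + Σ_n iⁿ ∫₀^t∫₀^{t₁}⋯∫₀^{t_{n-1}} A(t₁)⋯A(t_n) dt_n⋯dt₁`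
converges absolutely in the (submultiplicative) matrix norm, and gives the unique
differentiable solution of `i·V′(t) = −A(t)·V(t)` with `V(0) = 1` on `[0,T]`.
Here `dyson (n+1) t = i·∫₀^t A(s)·(dyson n s) ds`, `dyson 0 = 1`, encodes the iterated
integrals over the simplex. -/
theorem dyson_series_solves_ode
    (m : ℕ) (T : ℝ) (hT : 0 < T)
    (A : ℝ → Matrix (Fin m) (Fin m) ℂ)
    (hAcont : ContinuousOn A (Set.Icc 0 T))
    (dyson : ℕ → ℝ → Matrix (Fin m) (Fin m) ℂ)
    (hdyson0 : ∀ t, dyson 0 t = 1)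
    (hdysonSucc : ∀ n t, dyson (n + 1) t =
      Complex.I • ∫ s in (0:ℝ)..t, A s * dyson n s)
    (V : ℝ → Matrix (Fin m) (Fin m) ℂ)
    (hV : ∀ t, V t = ∑' n : ℕ, dyson n t) :
    (∀ t ∈ Set.Icc (0:ℝ) T, Summable fun n => ‖dyson n t‖) ∧
    V 0 = 1 ∧
    (∀ t ∈ Set.Icc (0:ℝ) T, ∃ D : Matrix (Fin m) (Fin m) ℂ,
      HasDerivWithinAt V D (Set.Icc (0:ℝ) T) t ∧ Complex.I • D = -(A t * V t)) ∧
    (∀ W W' : ℝ → Matrix (Fin m) (Fin m) ℂ, W 0 = 1 →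
      (∀ t ∈ Set.Icc (0:ℝ) T, HasDerivWithinAt W (W' t) (Set.Icc (0:ℝ) T) t) →
      (∀ t ∈ Set.Icc (0:ℝ) T, Complex.I • W' t = -(A t * W t)) →
      ∀ t ∈ Set.Icc (0:ℝ) T, W t = V t) := by
  letI : ContinuousENorm (Matrix (Fin m) (Fin m) ℂ) := SeminormedAddGroup.toContinuousENorm
  letI : ENormedAddMonoid (Matrix (Fin m) (Fin m) ℂ) := NormedAddGroup.toENormedAddMonoid
  letI : TopologicalSpace.PseudoMetrizableSpace (Matrix (Fin m) (Fin m) ℂ) :=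
    inferInstanceAs (TopologicalSpace.PseudoMetrizableSpace (Fin m → Fin m → ℂ))
  obtain ⟨M0, hM0⟩ := isCompact_Icc.exists_bound_of_continuousOn hAcont
  set M : ℝ := max M0 0 with hMdef
  have hM : ∀ s ∈ Set.Icc (0:ℝ) T, ‖A s‖ ≤ M := fun s hs => (hM0 s hs).trans (le_max_left _ _)
  have hM0' : (0:ℝ) ≤ M := le_max_right _ _
  set C : ℝ := ‖(1 : Matrix (Fin m) (Fin m) ℂ)‖ with hCdef
  have hC : 0 ≤ C := norm_nonneg _
  -- continuity of each dyson term
  have hcont : ∀ n, ContinuousOn (dyson n) (Set.Icc 0 T) := by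
    intro n
    induction n with
    | zero =>
      have : dyson 0 = fun _ => (1 : Matrix (Fin m) (Fin m) ℂ) := funext hdyson0
      rw [this]; exact continuousOn_const
    | succ n ih =>
      have h1 : ContinuousOn (fun t => ∫ s in (0:ℝ)..t, A s * dyson n s) (Set.Icc 0 T) := by
        have := continuousOn_primitive_interval
          (f := fun s => A s * dyson n s) (μ := volume) (a := (0:ℝ)) (b := T)
          (by rw [Set.uIcc_of_le hT.le]; exact (hAcont.mul ih).integrableOn_Icc)
        rwa [Set.uIcc_of_le hT.le] at this
      exact (h1.const_smul Complex.I).congr (fun t _ => hdysonSucc n t)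
  have hfcont : ∀ n, ContinuousOn (fun s => A s * dyson n s) (Set.Icc 0 T) := fun n =>
    hAcont.mul (hcont n)
  have hfint : ∀ n, IntegrableOn (fun s => A s * dyson n s) (Set.Icc 0 T) volume := fun n =>
    (hfcont n).integrableOn_Icc
  -- the factorial bound on the iterated integrals
  have hbound : ∀ n, ∀ t ∈ Set.Icc (0:ℝ) T, ‖dyson n t‖ ≤ C * (M ^ n * t ^ n / n.factorial) := by
    intro n
    induction n with
    | zero =>
      intro t ht
      rw [hdyson0, hCdef]
      simp only [pow_zero, Nat.factorial_zero, Nat.cast_one, one_mul, div_one, mul_one]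
      exact le_rfl
    | succ n ih =>
      intro t ht
      obtain ⟨ht0, htT⟩ := ht
      have hsub : Set.Icc (0:ℝ) t ⊆ Set.Icc 0 T := Set.Icc_subset_Icc le_rfl htT
      have hbd : ∀ s ∈ Set.Ioc (0:ℝ) t, ‖A s * dyson n s‖ ≤
          C * M ^ (n+1) / n.factorial * s ^ n := by
        intro s hs
        have hsI : s ∈ Set.Icc (0:ℝ) T := hsub ⟨hs.1.le, hs.2⟩
        calc ‖A s * dyson n s‖ ≤ ‖A s‖ * ‖dyson n s‖ := norm_mul_le _ _
          _ ≤ M * (C * (M ^ n * s ^ n / n.factorial)) := by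
              apply mul_le_mul (hM s hsI) (ih s hsI) (norm_nonneg _) hM0'
          _ = C * M ^ (n+1) / n.factorial * s ^ n := by ring
      have hgint : IntervalIntegrable (fun s => C * M ^ (n+1) / n.factorial * s ^ n)
          volume 0 t := (continuous_const.mul (continuous_pow n)).intervalIntegrable 0 t
      have hnorm : ‖∫ s in (0:ℝ)..t, A s * dyson n s‖ ≤
          |∫ s in (0:ℝ)..t, C * M ^ (n+1) / n.factorial * s ^ n| := by
        apply intervalIntegral.norm_integral_le_abs_of_norm_le ?_ hgint
        · rw [Set.uIoc_of_le ht0]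
          exact (ae_restrict_iff' measurableSet_Ioc).2 (Filter.Eventually.of_forall hbd)
      rw [hdysonSucc, norm_smul, Complex.norm_I, one_mul]
      refine hnorm.trans ?_
      rw [intervalIntegral.integral_const_mul, integral_pow, zero_pow (Nat.succ_ne_zero n),
        sub_zero]
      have hfac : (0:ℝ) < n.factorial := by positivity
      rw [abs_of_nonneg (mul_nonneg (by positivity)
        (div_nonneg (pow_nonneg ht0 _) (by positivity)))]
      apply le_of_eq
      rw [Nat.factorial_succ]
      push_cast
      field_simp
  have hboundT : ∀ n, ∀ t ∈ Set.Icc (0:ℝ) T,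
      ‖dyson n t‖ ≤ C * ((M * T) ^ n / n.factorial) := by
    intro n t ht
    refine (hbound n t ht).trans ?_
    rw [mul_pow]
    gcongr
    exacts [ht.1, ht.2]
  have hsumm : ∀ t ∈ Set.Icc (0:ℝ) T, Summable fun n => ‖dyson n t‖ := by
    intro t ht
    refine Summable.of_nonneg_of_le (fun n => norm_nonneg _) (fun n => hboundT n t ht) ?_
    exact (Real.summable_pow_div_factorial (M * T)).mul_left C
  have hVsum : ∀ t ∈ Set.Icc (0:ℝ) T, Summable fun n => dyson n t := fun t ht =>
    (hsumm t ht).of_norm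
  have h0T : (0:ℝ) ∈ Set.Icc (0:ℝ) T := Set.mem_Icc.2 ⟨le_rfl, hT.le⟩
  -- initial value
  have hV0 : V 0 = 1 := by
    rw [hV 0, Summable.tsum_eq_zero_add (hVsum 0 h0T), hdyson0]
    have hz : ∀ n : ℕ, dyson (n + 1) 0 = 0 := fun n => by
      rw [hdysonSucc, intervalIntegral.integral_same, smul_zero]
    simp [hz]
  -- continuity of V
  have hVcont : ContinuousOn V (Set.Icc 0 T) := by
    have := continuousOn_tsum hcont
      ((Real.summable_pow_div_factorial (M * T)).mul_left C)
      (fun n x hx => hboundT n x hx)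
    exact this.congr fun t _ => hV t
  have hAV : ContinuousOn (fun s => A s * V s) (Set.Icc 0 T) := hAcont.mul hVcont
  -- the integral equation for V
  have hkey : ∀ t ∈ Set.Icc (0:ℝ) T, V t = 1 + Complex.I • ∫ s in (0:ℝ)..t, A s * V s := by
    intro t ht
    obtain ⟨ht0, htT⟩ := ht
    have hsub : Set.Ioc (0:ℝ) t ⊆ Set.Icc 0 T := fun s hs => ⟨hs.1.le, hs.2.trans htT⟩
    have hFint : ∀ n : ℕ, Integrable (fun s => A s * dyson n s)
        (volume.restrict (Set.Ioc 0 t)) := fun n => ((hfint n).mono hsub le_rfl)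
    have hbd : ∀ n : ℕ, (∫ s in Set.Ioc (0:ℝ) t, ‖A s * dyson n s‖) ≤
        t * (M * (C * ((M * T) ^ n / n.factorial))) := by
      intro n
      have h1 : (∫ s in Set.Ioc (0:ℝ) t, ‖A s * dyson n s‖) ≤
          ∫ _ in Set.Ioc (0:ℝ) t, M * (C * ((M * T) ^ n / n.factorial)) := by
        refine setIntegral_mono_on (hFint n).norm (integrableOn_const ?_)
          measurableSet_Ioc ?_
        · rw [Real.volume_Ioc]; exact ENNReal.ofReal_ne_top
        · intro s hs
          refine (norm_mul_le _ _).trans ?_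
          exact mul_le_mul (hM s (hsub hs)) (hboundT n s (hsub hs)) (norm_nonneg _) hM0'
      refine h1.trans ?_
      rw [setIntegral_const, Real.volume_real_Ioc_of_le ht0, sub_zero,
        smul_eq_mul]
    have hsummableInt : Summable fun n => ∫ s in Set.Ioc (0:ℝ) t, ‖A s * dyson n s‖ := by
      refine Summable.of_nonneg_of_le
        (fun n => integral_nonneg fun s => norm_nonneg _) hbd ?_
      exact (((Real.summable_pow_div_factorial (M * T)).mul_left C).mul_left M).mul_left t
    have hHasSum := hasSum_integral_of_summable_integral_norm hFint hsummableInt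
    rw [hV t, Summable.tsum_eq_zero_add (hVsum t ⟨ht0, htT⟩), hdyson0]
    congr 1
    calc ∑' n : ℕ, dyson (n + 1) t
        = ∑' n : ℕ, Complex.I • ∫ s in Set.Ioc (0:ℝ) t, A s * dyson n s :=
          tsum_congr fun n => by rw [hdysonSucc, intervalIntegral.integral_of_le ht0]
      _ = Complex.I • ∫ s in Set.Ioc (0:ℝ) t, ∑' n : ℕ, A s * dyson n s :=
          (hHasSum.const_smul Complex.I).tsum_eq
      _ = Complex.I • ∫ s in Set.Ioc (0:ℝ) t, A s * V s := by
          congr 1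
          refine setIntegral_congr_fun measurableSet_Ioc fun s hs => ?_
          rw [(hVsum s (hsub hs)).tsum_mul_left (A s), hV s]
      _ = Complex.I • ∫ s in (0:ℝ)..t, A s * V s := by
          rw [intervalIntegral.integral_of_le ht0]
  -- differentiability of V
  have hVderiv : ∀ t ∈ Set.Icc (0:ℝ) T,
      HasDerivWithinAt V (Complex.I • (A t * V t)) (Set.Icc (0:ℝ) T) t := by
    intro t ht
    obtain ⟨ht0, htT⟩ := ht
    set f : ℝ → Matrix (Fin m) (Fin m) ℂ := fun s => A s * V s with hf
    have hfint' : IntegrableOn f (Set.Icc 0 T) volume := hAV.integrableOn_Icc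
    have hii : ∀ a b : ℝ, a ∈ Set.Icc (0:ℝ) T → b ∈ Set.Icc (0:ℝ) T →
        IntervalIntegrable f volume a b := fun a b ha hb =>
      (hfint'.mono (Set.uIcc_subset_Icc ha hb) le_rfl).intervalIntegrable
    have hmeas : ∀ u : Set ℝ, MeasurableSet u → u ⊆ Set.Icc 0 T → ∀ x : ℝ,
        StronglyMeasurableAtFilter f (nhdsWithin x u) volume := fun u hu hsub x =>
      ⟨u, self_mem_nhdsWithin, (hAV.mono hsub).aestronglyMeasurable hu⟩
    have hg : HasDerivWithinAt (fun u => ∫ s in (0:ℝ)..u, f s) (f t) (Set.Icc (0:ℝ) T) t := by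
      have h1 : HasDerivWithinAt (fun u => ∫ s in (0:ℝ)..u, f s) (f t) (Set.Icc (0:ℝ) t) t := by
        haveI : Fact (t ∈ Set.Icc (0:ℝ) t) := ⟨Set.mem_Icc.2 ⟨ht0, le_rfl⟩⟩
        exact intervalIntegral.integral_hasDerivWithinAt_right
          (hii 0 t ⟨le_rfl, hT.le⟩ ⟨ht0, htT⟩)
          (hmeas _ measurableSet_Icc (Set.Icc_subset_Icc le_rfl htT) t)
          ((hAV.mono (Set.Icc_subset_Icc le_rfl htT)) t ⟨ht0, le_rfl⟩)
      have h2 : HasDerivWithinAt (fun u => ∫ s in (0:ℝ)..u, f s) (f t) (Set.Icc t T) t := by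
        haveI : Fact (t ∈ Set.Icc t T) := ⟨Set.mem_Icc.2 ⟨le_rfl, htT⟩⟩
        have h3 : HasDerivWithinAt (fun u => ∫ s in u..T, f s) (-f t) (Set.Icc t T) t :=
          intervalIntegral.integral_hasDerivWithinAt_left
            (hii t T ⟨ht0, htT⟩ ⟨hT.le, le_rfl⟩)
            (hmeas _ measurableSet_Icc (Set.Icc_subset_Icc ht0 le_rfl) t)
            ((hAV.mono (Set.Icc_subset_Icc ht0 le_rfl)) t ⟨le_rfl, htT⟩)
        have h4 : HasDerivWithinAt (fun u => (∫ s in (0:ℝ)..T, f s) - ∫ s in u..T, f s)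
            (f t) (Set.Icc t T) t := by
          have h := h3.const_sub (∫ s in (0:ℝ)..T, f s)
          rw [neg_neg] at h
          exact h
        refine h4.congr (fun u hu => ?_) ?_
        · rw [eq_sub_iff_add_eq]
          exact intervalIntegral.integral_add_adjacent_intervals
            (hii 0 u ⟨le_rfl, hT.le⟩ ⟨ht0.trans hu.1, hu.2⟩)
            (hii u T ⟨ht0.trans hu.1, hu.2⟩ ⟨hT.le, le_rfl⟩)
        · rw [eq_sub_iff_add_eq]
          exact intervalIntegral.integral_add_adjacent_intervals
            (hii 0 t ⟨le_rfl, hT.le⟩ ⟨ht0, htT⟩) (hii t T ⟨ht0, htT⟩ ⟨hT.le, le_rfl⟩)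
      have := h1.union h2
      rwa [Set.Icc_union_Icc_eq_Icc ht0 htT] at this
    have h5 : HasDerivWithinAt (fun u => 1 + Complex.I • ∫ s in (0:ℝ)..u, f s)
        (Complex.I • f t) (Set.Icc (0:ℝ) T) t := (hg.const_smul Complex.I).const_add 1
    exact h5.congr (fun u hu => hkey u hu) (hkey t ⟨ht0, htT⟩)
  refine ⟨hsumm, hV0, ?_, ?_⟩
  · intro t ht
    refine ⟨Complex.I • (A t * V t), hVderiv t ht, ?_⟩
    rw [smul_smul, Complex.I_mul_I, neg_one_smul]
  -- uniqueness
  · intro W W' hW0 hWd hODE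
    set v : ℝ → Matrix (Fin m) (Fin m) ℂ → Matrix (Fin m) (Fin m) ℂ :=
      fun t x => Complex.I • (A (max 0 (min t T)) * x) with hvdef
    have hclamp : ∀ t : ℝ, max 0 (min t T) ∈ Set.Icc (0:ℝ) T := fun t =>
      ⟨le_max_left _ _, max_le hT.le (min_le_right _ _)⟩
    have hclamp_eq : ∀ t ∈ Set.Icc (0:ℝ) T, max 0 (min t T) = t := fun t ht => by
      rw [min_eq_left ht.2, max_eq_right ht.1]
    have hv : ∀ t, LipschitzOnWith M.toNNReal (v t) Set.univ := by
      intro t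
      refine (LipschitzWith.of_dist_le_mul fun x y => ?_).lipschitzOnWith
      rw [dist_eq_norm]
      have : v t x - v t y = Complex.I • (A (max 0 (min t T)) * (x - y)) := by
        rw [hvdef]; simp only [← smul_sub, ← mul_sub]
      rw [this, norm_smul, Complex.norm_I, one_mul, Real.coe_toNNReal _ hM0', dist_eq_norm]
      exact (norm_mul_le _ _).trans
        (mul_le_mul_of_nonneg_right (hM _ (hclamp t)) (norm_nonneg _))
    have hW'eq : ∀ t ∈ Set.Icc (0:ℝ) T, W' t = Complex.I • (A t * W t) := by
      intro t ht
      apply smul_right_injective _ Complex.I_ne_zero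
      show Complex.I • W' t = Complex.I • Complex.I • (A t * W t)
      rw [hODE t ht, smul_smul, Complex.I_mul_I, neg_one_smul]
    have huniq :=
      ODE_solution_unique_of_mem_Icc_right (v := v) (s := fun _ => Set.univ)
        (K := M.toNNReal) (a := (0:ℝ)) (b := T) (fun t _ => hv t)
        (fun t ht => (hWd t ht).continuousWithinAt)
        (fun t ht => by
          have h1 := (hWd t (Set.Ico_subset_Icc_self ht)).mono_of_mem_nhdsWithin
            (Icc_mem_nhdsGE_of_mem ht)
          rw [hW'eq t (Set.Ico_subset_Icc_self ht)] at h1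
          simpa [hvdef, hclamp_eq t (Set.Ico_subset_Icc_self ht)] using h1)
        (fun t _ => Set.mem_univ _)
        hVcont
        (fun t ht => by
          have h1 := (hVderiv t (Set.Ico_subset_Icc_self ht)).mono_of_mem_nhdsWithin
            (Icc_mem_nhdsGE_of_mem ht)
          simpa [hvdef, hclamp_eq t (Set.Ico_subset_Icc_self ht)] using h1)
        (fun t _ => Set.mem_univ _)
        (by rw [hW0, hV0])
    exact fun t ht => huniq ht
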